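/- Let G = (V,E) be a finite simple graph of order n, size m, maximum degree Δ and minimum degree δ, and let k be an integer with k ≠ Δ and k ≠ δ. Suppose V is partitioned into two boundary defensive k-alliances S and V∖S, and let M be the set of edges of G with one endpoint in S and the other in V∖S. Then ⌈(2m - kn)/(2(Δ-k))⌉ ≤ |S| ≤ ⌊(2m - kn)/(2(δ-k))⌋ and 4|M| = 2m - kn. -/

import Mathlib

open Finset

variable {V : Type*}

/-- `degIn G S v` is the number of neighbors that `v` has in `S` (denoted `δ_S(v)`). -/
def degIn [Fintype V] [DecidableEq V] (G : SimpleGraph V) [DecidableRel G.Adj]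
    (S : Finset V) (v : V) : ℕ :=
  (G.neighborFinset v ∩ S).card

/-- A nonempty set `S` is a defensive `k`-alliance in `G` if every vertex of `S` has at least
`k` more neighbors inside `S` than outside. -/
def IsDefensiveKAlliance [Fintype V] [DecidableEq V] (G : SimpleGraph V) [DecidableRel G.Adj]
    (k : ℤ) (S : Finset V) : Prop :=
  S.Nonempty ∧ ∀ v ∈ S, (degIn G Sᶜ v : ℤ) + k ≤ (degIn G S v : ℤ)

/-- The defensive `k`-alliance number: minimum cardinality of a defensive `k`-alliance. -/
noncomputable def defensiveAllianceNum [Fintype V] [DecidableEq V] (G : SimpleGraph V)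
    [DecidableRel G.Adj] (k : ℤ) : ℕ :=
  sInf {m : ℕ | ∃ S : Finset V, IsDefensiveKAlliance G k S ∧ S.card = m}

/-- A nonempty set `S` is a boundary defensive `k`-alliance in `G` if every vertex of `S` has
exactly `k` more neighbors inside `S` than outside. -/
def IsBoundaryDefensiveKAlliance [Fintype V] [DecidableEq V] (G : SimpleGraph V)
    [DecidableRel G.Adj] (k : ℤ) (S : Finset V) : Prop :=
  S.Nonempty ∧ ∀ v ∈ S, (degIn G S v : ℤ) = (degIn G Sᶜ v : ℤ) + k

lemma degIn_add_compl [Fintype V] [DecidableEq V] (G : SimpleGraph V) [DecidableRel G.Adj]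
    (S : Finset V) (v : V) : degIn G S v + degIn G Sᶜ v = G.degree v := by
  unfold degIn
  rw [show G.neighborFinset v ∩ Sᶜ = G.neighborFinset v \ S by ext x; simp [Finset.mem_sdiff, Finset.mem_compl]]
  rw [Finset.card_inter_add_card_sdiff]
  rfl

lemma cross_card [Fintype V] [DecidableEq V] (G : SimpleGraph V) [DecidableRel G.Adj]
    (S : Finset V) :
    (G.edgeFinset.filter fun e => (∃ v ∈ e, v ∈ S) ∧ ∃ v ∈ e, v ∉ S).card
      = ∑ a ∈ S, degIn G Sᶜ a := by
  classical
  set P : Finset (V × V) := univ.filter fun p => p.1 ∈ S ∧ p.2 ∉ S ∧ G.Adj p.1 p.2 with hP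
  have hPcard : P.card = ∑ a ∈ S, degIn G Sᶜ a := by
    rw [Finset.card_eq_sum_card_fiberwise (f := Prod.fst) (t := S)
      (fun p hp => (Finset.mem_filter.mp hp).2.1)]
    refine Finset.sum_congr rfl fun a ha => ?_
    have : P.filter (fun p => p.1 = a) = (G.neighborFinset a ∩ Sᶜ).image (fun b => (a, b)) := by
      ext ⟨x, y⟩
      simp only [hP, Finset.mem_filter, Finset.mem_univ, true_and, Finset.mem_image,
        Finset.mem_inter, SimpleGraph.mem_neighborFinset, Finset.mem_compl]
      constructor
      · rintro ⟨⟨hx, hy, hadj⟩, rfl⟩; exact ⟨y, ⟨hadj, hy⟩, rfl⟩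
      · rintro ⟨b, ⟨hadj, hb⟩, h⟩; obtain ⟨rfl, rfl⟩ := Prod.mk.injEq .. ▸ h
        exact ⟨⟨ha, hb, hadj⟩, rfl⟩
    rw [this, Finset.card_image_of_injective _ (fun b c h => (Prod.mk.injEq .. ▸ h).2)]
    rfl
  rw [← hPcard]
  refine (Finset.card_bij (fun p _ => Sym2.mk p.1 p.2) ?_ ?_ ?_).symm
  · rintro ⟨a, b⟩ hp
    obtain ⟨ha, hb, hadj⟩ := Finset.mem_filter.mp hp |>.2
    refine Finset.mem_filter.mpr ⟨SimpleGraph.mem_edgeFinset.mpr hadj, ⟨a, ?_, ha⟩, ⟨b, ?_, hb⟩⟩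
    · exact Sym2.mem_mk_left a b
    · exact Sym2.mem_mk_right a b
  · rintro ⟨a, b⟩ hp ⟨c, d⟩ hq h
    obtain ⟨ha, hb, -⟩ := Finset.mem_filter.mp hp |>.2
    obtain ⟨hc, hd, -⟩ := Finset.mem_filter.mp hq |>.2
    rcases Sym2.eq_iff.mp h with ⟨rfl, rfl⟩ | ⟨rfl, rfl⟩
    · rfl
    · exact absurd ha hd
  · intro e he
    obtain ⟨hee, ⟨u, hu, huS⟩, ⟨w, hw, hwS⟩⟩ := Finset.mem_filter.mp he
    induction e using Sym2.inductionOn with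
    | hf x y =>
      have hadj : G.Adj x y := SimpleGraph.mem_edgeFinset.mp hee
      rcases Sym2.mem_iff.mp hu with rfl | rfl
      · rcases Sym2.mem_iff.mp hw with rfl | rfl
        · exact absurd huS hwS
        · exact ⟨(u, w), Finset.mem_filter.mpr ⟨Finset.mem_univ _, huS, hwS, hadj⟩, rfl⟩
      · rcases Sym2.mem_iff.mp hw with rfl | rfl
        · exact ⟨(u, w), Finset.mem_filter.mpr ⟨Finset.mem_univ _, huS, hwS, hadj.symm⟩,
            Sym2.eq_swap⟩
        · exact absurd huS hwS

/-- Theorem: if `V` is partitioned into two boundary defensive `k`-alliances `S` and `V∖S`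
(with `k ≠ Δ`, `k ≠ δ`), and `M` is the set of edges between `S` and `V∖S`, then
`⌈(2m-kn)/(2(Δ-k))⌉ ≤ |S| ≤ ⌊(2m-kn)/(2(δ-k))⌋` and `4|M| = 2m - kn`. -/
theorem partition_two_boundaryDefensiveKAlliances [Fintype V] [DecidableEq V] [Nonempty V]
    (G : SimpleGraph V) [DecidableRel G.Adj] (k : ℤ)
    (hkD : k ≠ (G.maxDegree : ℤ)) (hkd : k ≠ (G.minDegree : ℤ))
    (S : Finset V) (hS : IsBoundaryDefensiveKAlliance G k S)
    (hSc : IsBoundaryDefensiveKAlliance G k Sᶜ)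
    (M : Finset (Sym2 V))
    (hM : M = G.edgeFinset.filter fun e => (∃ v ∈ e, v ∈ S) ∧ ∃ v ∈ e, v ∉ S) :
    ⌈(2 * (G.edgeFinset.card : ℚ) - (k : ℚ) * (Fintype.card V : ℚ)) /
        (2 * ((G.maxDegree : ℚ) - (k : ℚ)))⌉ ≤ (S.card : ℤ) ∧
      (S.card : ℤ) ≤ ⌊(2 * (G.edgeFinset.card : ℚ) - (k : ℚ) * (Fintype.card V : ℚ)) /
        (2 * ((G.minDegree : ℚ) - (k : ℚ)))⌋ ∧
      4 * (M.card : ℤ) = 2 * (G.edgeFinset.card : ℤ) - k * (Fintype.card V : ℤ) := by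
  classical
  -- key: 2 * degIn Sᶜ v = deg v - k for v ∈ S, and 2 * degIn S v = deg v - k for v ∈ Sᶜ
  have h1 : ∀ v ∈ S, 2 * (degIn G Sᶜ v : ℤ) = (G.degree v : ℤ) - k := by
    intro v hv
    have hd := degIn_add_compl G S v
    have := hS.2 v hv
    omega
  have h2 : ∀ v ∈ Sᶜ, 2 * (degIn G S v : ℤ) = (G.degree v : ℤ) - k := by
    intro v hv
    have hd := degIn_add_compl G Sᶜ v
    have := hSc.2 v hv
    rw [compl_compl] at *
    omega
  -- M.card = ∑ a ∈ S, degIn G Sᶜ a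
  have hMS : (M.card : ℤ) = ∑ a ∈ S, (degIn G Sᶜ a : ℤ) := by
    rw [hM, cross_card]; push_cast; ring
  have hMSc : (M.card : ℤ) = ∑ a ∈ Sᶜ, (degIn G S a : ℤ) := by
    have : (G.edgeFinset.filter fun e => (∃ v ∈ e, v ∈ S) ∧ ∃ v ∈ e, v ∉ S)
        = (G.edgeFinset.filter fun e => (∃ v ∈ e, v ∈ Sᶜ) ∧ ∃ v ∈ e, v ∉ Sᶜ) := by
      apply Finset.filter_congr
      intro e _
      simp only [Finset.mem_compl, not_not]
      tauto
    rw [hM, this, cross_card, compl_compl]; push_cast; ring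
  -- handshake
  have hsum : ∑ v : V, (G.degree v : ℤ) = 2 * (G.edgeFinset.card : ℤ) := by
    have := G.sum_degrees_eq_twice_card_edges
    exact_mod_cast congrArg (Nat.cast : ℕ → ℤ) this
  have hsplit : ∑ v : V, ((G.degree v : ℤ) - k) = ∑ v ∈ S, ((G.degree v : ℤ) - k)
      + ∑ v ∈ Sᶜ, ((G.degree v : ℤ) - k) := by
    rw [← Finset.sum_add_sum_compl S]
  have hS1 : ∑ v ∈ S, ((G.degree v : ℤ) - k) = 2 * (M.card : ℤ) := by
    rw [hMS, Finset.mul_sum]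
    exact Finset.sum_congr rfl fun v hv => (h1 v hv).symm
  have hS2 : ∑ v ∈ Sᶜ, ((G.degree v : ℤ) - k) = 2 * (M.card : ℤ) := by
    rw [hMSc, Finset.mul_sum]
    exact Finset.sum_congr rfl fun v hv => (h2 v hv).symm
  have htotal : ∑ v : V, ((G.degree v : ℤ) - k)
      = 2 * (G.edgeFinset.card : ℤ) - k * (Fintype.card V : ℤ) := by
    rw [Finset.sum_sub_distrib, hsum, Finset.sum_const, Finset.card_univ]
    ring
  have hmain : 4 * (M.card : ℤ) = 2 * (G.edgeFinset.card : ℤ) - k * (Fintype.card V : ℤ) := by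
    rw [← htotal, hsplit, hS1, hS2]; ring
  -- k < minDegree and k < maxDegree
  have hkle : k ≤ (G.minDegree : ℤ) := by
    obtain ⟨v, hv⟩ := G.exists_minimal_degree_vertex
    rw [hv]
    by_cases hvS : v ∈ S
    · have := h1 v hvS; omega
    · have := h2 v (Finset.mem_compl.mpr hvS); omega
  have hδ : k < (G.minDegree : ℤ) := lt_of_le_of_ne hkle hkd
  have hΔ : k < (G.maxDegree : ℤ) := by
    obtain ⟨v, hv⟩ := G.exists_minimal_degree_vertex
    have h3 := G.degree_le_maxDegree v
    refine lt_of_le_of_ne ?_ hkD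
    calc k ≤ (G.minDegree : ℤ) := hkle
      _ = (G.degree v : ℤ) := by exact_mod_cast hv
      _ ≤ (G.maxDegree : ℤ) := by exact_mod_cast h3
  -- bounds on ∑ v ∈ S (deg v - k)
  have hlow : (S.card : ℤ) * ((G.minDegree : ℤ) - k) ≤ 2 * (M.card : ℤ) := by
    rw [← hS1]
    calc (S.card : ℤ) * ((G.minDegree : ℤ) - k) = ∑ _v ∈ S, ((G.minDegree : ℤ) - k) := by
          rw [Finset.sum_const, nsmul_eq_mul]
      _ ≤ ∑ v ∈ S, ((G.degree v : ℤ) - k) := by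
          refine Finset.sum_le_sum fun v _ => ?_
          have := G.minDegree_le_degree v
          omega
  have hhigh : 2 * (M.card : ℤ) ≤ (S.card : ℤ) * ((G.maxDegree : ℤ) - k) := by
    rw [← hS1]
    calc ∑ v ∈ S, ((G.degree v : ℤ) - k) ≤ ∑ _v ∈ S, ((G.maxDegree : ℤ) - k) := by
          refine Finset.sum_le_sum fun v _ => ?_
          have := G.degree_le_maxDegree v
          omega
      _ = (S.card : ℤ) * ((G.maxDegree : ℤ) - k) := by rw [Finset.sum_const, nsmul_eq_mul]
  refine ⟨?_, ?_, hmain⟩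
  · rw [Int.ceil_le]
    have hpos : (0 : ℚ) < 2 * ((G.maxDegree : ℚ) - (k : ℚ)) := by
      have : (k : ℚ) < (G.maxDegree : ℚ) := by exact_mod_cast hΔ
      linarith
    rw [div_le_iff₀ hpos]
    have : 2 * (G.edgeFinset.card : ℤ) - k * (Fintype.card V : ℤ)
        ≤ (S.card : ℤ) * (2 * ((G.maxDegree : ℤ) - k)) := by
      rw [← hmain]; linarith
    calc 2 * (G.edgeFinset.card : ℚ) - (k : ℚ) * (Fintype.card V : ℚ)
        ≤ ((S.card : ℤ) : ℚ) * (2 * ((G.maxDegree : ℚ) - (k : ℚ))) := by exact_mod_cast this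
      _ = _ := by norm_num
  · rw [Int.le_floor]
    have hpos : (0 : ℚ) < 2 * ((G.minDegree : ℚ) - (k : ℚ)) := by
      have : (k : ℚ) < (G.minDegree : ℚ) := by exact_mod_cast hδ
      linarith
    rw [le_div_iff₀ hpos]
    have : (S.card : ℤ) * (2 * ((G.minDegree : ℤ) - k))
        ≤ 2 * (G.edgeFinset.card : ℤ) - k * (Fintype.card V : ℤ) := by
      rw [← hmain]; linarith
    exact_mod_cast this
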